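/- For a weighted homogeneous polynomial f of type (d; w) in n variables with isolated singularity at 0, for every index i there exists either a monomial z_i^{q} or a monomial z_i^{q} z_j (j ≠ i, q ≥ 1) appearing in f with nonzero coefficient. -/

import Mathlib

open MvPolynomial Filter

lemma coeff_pderiv_aux {n : ℕ} (j : Fin n) (f : MvPolynomial (Fin n) ℂ)
    (m : Fin n →₀ ℕ) :
    coeff m (pderiv j f) = (m j + 1 : ℂ) * coeff (m + Finsupp.single j 1) f := by
  induction f using MvPolynomial.induction_on' with
  | monomial s a =>
    rw [pderiv_monomial, coeff_monomial, coeff_monomial]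
    by_cases h : s = m + Finsupp.single j 1
    · have h1 : s - Finsupp.single j 1 = m := by
        rw [h]; exact add_tsub_cancel_right ..
      have h2 : (s j : ℂ) = m j + 1 := by
        rw [h]; push_cast [Finsupp.add_apply, Finsupp.single_apply]; simp
      simp [h1, h, h2, mul_comm]
    · rw [if_neg h, mul_zero]
      by_cases h3 : s - Finsupp.single j 1 = m
      · rw [if_pos h3]
        rcases Nat.eq_zero_or_pos (s j) with h4 | h4
        · simp [h4]
        · exfalso
          apply h
          have hle : Finsupp.single j 1 ≤ s := by
            rwa [Finsupp.single_le_iff]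
          rw [← h3, tsub_add_cancel_of_le hle]
      · rw [if_neg h3]
  | add p q hp hq =>
    simp only [map_add, coeff_add, hp, hq, mul_add]

/-- For a weighted homogeneous polynomial with an isolated singularity at `0`,
for every index `i` there is a monomial `zᵢ^q` or `zᵢ^q z_j` (`j ≠ i`, `q ≥ 1`)
appearing in `f` with nonzero coefficient. -/
theorem exists_pure_or_semipure_monomial (n : ℕ) (w : Fin n → ℕ) (d : ℕ)
    (hw : ∀ i, 0 < w i)
    (f : MvPolynomial (Fin n) ℂ)
    (hf : f.IsWeightedHomogeneous w d)
    (hsing : ∀ i, eval (0 : Fin n → ℂ) (pderiv i f) = 0)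
    (hiso : ∀ᶠ z in nhds (0 : Fin n → ℂ),
      (∀ i, eval z (pderiv i f) = 0) → z = 0) :
    ∀ i : Fin n,
      (∃ q : ℕ, 1 ≤ q ∧ coeff (Finsupp.single i q) f ≠ 0) ∨
      (∃ q : ℕ, ∃ j : Fin n, j ≠ i ∧ 1 ≤ q ∧
        coeff (Finsupp.single i q + Finsupp.single j 1) f ≠ 0) := by
  intro i
  by_contra hcon
  push_neg at hcon
  obtain ⟨hA, hB⟩ := hcon
  -- the linear coefficients of f all vanish
  have hlin : ∀ j : Fin n, coeff (Finsupp.single j 1) f = 0 := by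
    intro j
    have h0 := hsing j
    rw [eval_zero, constantCoeff_eq, coeff_pderiv_aux] at h0
    simpa using h0
  -- the axis curve
  set z : ℂ → Fin n → ℂ := fun t k => if k = i then t else 0 with hz
  have hzc : Continuous z := by
    apply continuous_pi
    intro k
    by_cases hk : k = i <;> simp [hz, hk] <;> fun_prop
  -- all partials vanish along the axis
  have key : ∀ t : ℂ, ∀ j : Fin n, eval (z t) (pderiv j f) = 0 := by
    intro t j
    rw [eval_eq]
    apply Finset.sum_eq_zero
    intro m _
    by_cases hm : ∀ k, k ≠ i → m k = 0
    · -- m is supported on i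
      have hms : m = Finsupp.single i (m i) := by
        ext k
        by_cases hk : k = i
        · simp [hk]
        · simp [Finsupp.single_apply, Ne.symm hk, hm k hk]
      have hc : coeff m (pderiv j f) = 0 := by
        rw [coeff_pderiv_aux]
        by_cases hj : j = i
        · subst hj
          have : m + Finsupp.single j 1 = Finsupp.single j (m j + 1) := by
            rw [hms]; simp [Finsupp.single_add]
          rw [this, hA (m j + 1) (Nat.le_add_left 1 (m j))]
          ring
        · rcases Nat.eq_zero_or_pos (m i) with h4 | h4
          · have hm0 : m = 0 := by rw [hms, h4, Finsupp.single_zero]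
            rw [hm0, zero_add, hlin j]
            ring
          · rw [hms, hB (m i) j hj h4]
            ring
      rw [hc, zero_mul]
    · push_neg at hm
      obtain ⟨k, hk, hmk⟩ := hm
      have : ∏ l ∈ m.support, z t l ^ m l = 0 := by
        apply Finset.prod_eq_zero (Finsupp.mem_support_iff.mpr hmk)
        simp [hz, hk, hmk, zero_pow]
      rw [this, mul_zero]
  -- derive a contradiction with the isolated singularity
  have htend : Tendsto z (nhds 0) (nhds (0 : Fin n → ℂ)) := by
    have : z 0 = 0 := by funext k; simp [hz]
    simpa [this] using hzc.tendsto 0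
  have hev : ∀ᶠ t in nhds (0 : ℂ), z t = 0 := by
    filter_upwards [htend.eventually hiso] with t ht
    exact ht (key t)
  have hev' : ∀ᶠ t in nhdsWithin (0 : ℂ) {(0 : ℂ)}ᶜ, z t = 0 :=
    hev.filter_mono nhdsWithin_le_nhds
  obtain ⟨t, htz, htne⟩ := (hev'.and self_mem_nhdsWithin).exists
  apply htne
  have := congrFun htz i
  simpa [hz] using this
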